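/- arXiv:2509.06287 — 2 statements merged into one kernel-verified Lean document; each statement's English description precedes it below -/
import Mathlib

section
/- For π ∈ [0,1]^K, define Clip(π) = max{π − ν*(π), π_min} coordinatewise, where ν*(π) is the unique value ν such that Σ_{a=1}^K max{π_a − ν, π_min} = 1. Then Clip(π) equals the L2 (Euclidean) projection of π onto the constrained simplex {p ∈ [0,1]^K : Σ_{a=1}^K p_a = 1, p_a ≥ π_min for all a}. -/
open Finset

noncomputable section

/-- **Lemma 1 (the clipping operator is the L2 projection onto the constrained simplex).**
For `π ∈ [0,1]^K` and `ν*(π)` the (unique) value `ν` with `∑ₐ max(πₐ − ν, π_min) = 1`, the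
vector `Clip(π) = (max(πₐ − ν*(π), π_min))ₐ` is the Euclidean (L2) projection of `π` onto
`{p ∈ [0,1]^K : ∑ₐ pₐ = 1, pₐ ≥ π_min}`: it belongs to this set and minimizes the squared
Euclidean distance to `π` over it. -/
theorem clip_eq_L2_projection
    {K : ℕ} (πmin : ℝ) (hπmin_pos : 0 < πmin) (hπmin_le : πmin ≤ 1 / K)
    (p : Fin K → ℝ) (hp : ∀ a, p a ∈ Set.Icc (0 : ℝ) 1)
    (ν : ℝ) (hν : ∑ a, max (p a - ν) πmin = 1)
    (hν_unique : ∀ ν' : ℝ, (∑ a, max (p a - ν') πmin = 1) → ν' = ν) :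
    -- Clip(p) lies in the constrained simplex ...
    ((∀ a, max (p a - ν) πmin ∈ Set.Icc (0 : ℝ) 1) ∧
      (∑ a, max (p a - ν) πmin = 1) ∧
      (∀ a, πmin ≤ max (p a - ν) πmin)) ∧
    -- ... and minimizes the Euclidean distance to p over that set
    (∀ q : Fin K → ℝ,
      (∀ a, q a ∈ Set.Icc (0 : ℝ) 1) → (∑ a, q a = 1) → (∀ a, πmin ≤ q a) →
      ∑ a, (p a - max (p a - ν) πmin) ^ 2 ≤ ∑ a, (p a - q a) ^ 2) := by
  set c : Fin K → ℝ := fun a => max (p a - ν) πmin with hc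
  have hcmin : ∀ a, πmin ≤ c a := fun a => le_max_right _ _
  have hc0 : ∀ a, 0 ≤ c a := fun a => hπmin_pos.le.trans (hcmin a)
  have hc1 : ∀ a, c a ≤ 1 := by
    intro a
    calc c a ≤ ∑ b, c b := Finset.single_le_sum (fun b _ => hc0 b) (mem_univ a)
    _ = 1 := hν
  refine ⟨⟨fun a => ⟨hc0 a, hc1 a⟩, hν, hcmin⟩, ?_⟩
  intro q hq hqsum hqmin
  have key : ∀ a, ν * (c a - q a) ≤ (p a - c a) * (c a - q a) := by
    intro a
    rcases le_or_gt πmin (p a - ν) with h | h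
    · have hca : c a = p a - ν := max_eq_left h
      rw [hca]; ring_nf; exact le_rfl
    · have hca : c a = πmin := max_eq_right h.le
      have h1 : c a - q a ≤ 0 := by rw [hca]; linarith [hqmin a]
      have h2 : p a - c a ≤ ν := by rw [hca]; linarith
      nlinarith
  have sumkey : 0 ≤ ∑ a, (p a - c a) * (c a - q a) := by
    have hle : ∑ a, ν * (c a - q a) ≤ ∑ a, (p a - c a) * (c a - q a) :=
      Finset.sum_le_sum (fun a _ => key a)
    have h0 : ∑ a, ν * (c a - q a) = 0 := by
      rw [← Finset.mul_sum, Finset.sum_sub_distrib, hν, hqsum]; ring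
    linarith
  have sq : 0 ≤ ∑ a, (c a - q a) ^ 2 :=
    Finset.sum_nonneg fun a _ => sq_nonneg _
  have expand : ∑ a, (p a - q a) ^ 2
      = ∑ a, (p a - c a) ^ 2 + (∑ a, (c a - q a) ^ 2
        + 2 * ∑ a, (p a - c a) * (c a - q a)) := by
    rw [Finset.mul_sum, ← Finset.sum_add_distrib, ← Finset.sum_add_distrib]
    exact Finset.sum_congr rfl fun a _ => by ring
  linarith
end
end

section
/- The clipping map Clip: [0,1]^K → R^K defined by Clip(π) = max{π − ν*(π), π_min} coordinatewise, where ν*(π) is the unique ν with Σ_{a=1}^K max{π_a − ν, π_min} = 1, is Lipschitz continuous with Lipschitz constant K + 1 with respect to the Euclidean norm: ‖Clip(π) − Clip(π')‖₂ ≤ (K+1)‖π − π'‖₂ for all π, π' ∈ [0,1]^K. -/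
open Finset

noncomputable section

/-- **The clipping map is `(K+1)`-Lipschitz in the Euclidean norm.**
For `π, π' ∈ [0,1]^K`, letting `ν, ν'` be the (unique) constants with
`∑ₐ max(πₐ − ν, π_min) = 1` and `∑ₐ max(π'ₐ − ν', π_min) = 1`, the clipped vectors satisfy
`‖Clip(π) − Clip(π')‖₂ ≤ (K+1) ‖π − π'‖₂`. -/
theorem clip_lipschitz
    {K : ℕ} (πmin : ℝ) (hπmin_pos : 0 < πmin) (hπmin_le : πmin ≤ 1 / K)
    (p q : Fin K → ℝ)
    (hp : ∀ a, p a ∈ Set.Icc (0 : ℝ) 1) (hq : ∀ a, q a ∈ Set.Icc (0 : ℝ) 1)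
    (ν ν' : ℝ)
    (hν : ∑ a, max (p a - ν) πmin = 1)
    (hν' : ∑ a, max (q a - ν') πmin = 1)
    (hν_unique : ∀ t : ℝ, (∑ a, max (p a - t) πmin = 1) → t = ν)
    (hν'_unique : ∀ t : ℝ, (∑ a, max (q a - t) πmin = 1) → t = ν') :
    Real.sqrt (∑ a, (max (p a - ν) πmin - max (q a - ν') πmin) ^ 2) ≤
      (K + 1) * Real.sqrt (∑ a, (p a - q a) ^ 2) := by
  set d : Fin K → ℝ := fun a => |p a - q a| with hd
  set δ : ℝ := ∑ a, d a with hδ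
  have hδ0 : 0 ≤ δ := Finset.sum_nonneg fun a _ => abs_nonneg _
  have hda : ∀ a : Fin K, d a ≤ δ := fun a =>
    Finset.single_le_sum (fun a _ => abs_nonneg (p a - q a)) (Finset.mem_univ a)
  set g : ℝ → ℝ := fun t => ∑ a, max (q a - t) πmin with hg
  have hcont : Continuous g := by
    apply continuous_finset_sum
    intro a _
    exact (continuous_const.sub continuous_id).max continuous_const
  have h1 : g (ν + δ) ≤ 1 := by
    rw [← hν]
    refine Finset.sum_le_sum fun a _ => max_le_max ?_ le_rfl
    have := neg_abs_le (p a - q a)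
    have := hda a
    simp only [hd] at *
    linarith
  have h2 : (1 : ℝ) ≤ g (ν - δ) := by
    rw [← hν]
    refine Finset.sum_le_sum fun a _ => max_le_max ?_ le_rfl
    have := le_abs_self (p a - q a)
    have := hda a
    simp only [hd] at *
    linarith
  have hmem : (1 : ℝ) ∈ Set.Icc (g (ν + δ)) (g (ν - δ)) := ⟨h1, h2⟩
  obtain ⟨t, ht, hgt⟩ :=
    intermediate_value_Icc' (by linarith : ν - δ ≤ ν + δ) hcont.continuousOn hmem
  have htν' : t = ν' := hν'_unique t hgt
  have hΔ : |ν - ν'| ≤ δ := by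
    rw [← htν']
    rcases ht with ⟨h3, h4⟩
    rw [abs_le]
    constructor <;> linarith
  -- coordinatewise bound
  have hc : ∀ a : Fin K,
      (max (p a - ν) πmin - max (q a - ν') πmin) ^ 2 ≤ (d a + δ) ^ 2 := by
    intro a
    have h := abs_max_sub_max_le_abs (p a - ν) (q a - ν') πmin
    have h2' : |(p a - ν) - (q a - ν')| ≤ d a + δ := by
      have : (p a - ν) - (q a - ν') = (p a - q a) + (ν' - ν) := by ring
      rw [this]
      calc |(p a - q a) + (ν' - ν)| ≤ |p a - q a| + |ν' - ν| := abs_add_le _ _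
        _ ≤ d a + δ := by
            have : |ν' - ν| = |ν - ν'| := abs_sub_comm _ _
            simp only [hd]; linarith
    have habs : |max (p a - ν) πmin - max (q a - ν') πmin| ≤ d a + δ := h.trans h2'
    calc (max (p a - ν) πmin - max (q a - ν') πmin) ^ 2
        = |max (p a - ν) πmin - max (q a - ν') πmin| ^ 2 := (sq_abs _).symm
      _ ≤ (d a + δ) ^ 2 := by
          apply pow_le_pow_left₀ (abs_nonneg _) habs
  set T : ℝ := ∑ a, (p a - q a) ^ 2 with hT
  have hT0 : 0 ≤ T := Finset.sum_nonneg fun a _ => sq_nonneg _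
  have hdT : ∑ a, d a ^ 2 = T := by
    simp only [hd, hT, sq_abs]
  have hδsq : δ ^ 2 ≤ K * T := by
    have := sq_sum_le_card_mul_sum_sq (s := Finset.univ) (f := d)
    simpa [hδ, hdT] using this
  have hsum : ∑ a, (max (p a - ν) πmin - max (q a - ν') πmin) ^ 2 ≤ (K + 1) ^ 2 * T := by
    calc ∑ a, (max (p a - ν) πmin - max (q a - ν') πmin) ^ 2
        ≤ ∑ a, (d a + δ) ^ 2 := Finset.sum_le_sum fun a _ => hc a
      _ = ∑ a, d a ^ 2 + 2 * δ * ∑ a, d a + K * δ ^ 2 := by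
          simp only [add_sq]
          rw [Finset.sum_add_distrib, Finset.sum_add_distrib,
            Finset.sum_const, Finset.card_univ, Fintype.card_fin, nsmul_eq_mul]
          have hmid : ∑ x : Fin K, 2 * d x * δ = 2 * δ * ∑ x : Fin K, d x := by
            rw [Finset.mul_sum]; exact Finset.sum_congr rfl fun x _ => by ring
          rw [hmid]
      _ = T + 2 * δ ^ 2 + K * δ ^ 2 := by rw [hdT, ← hδ]; ring
      _ ≤ T + 2 * (K * T) + K * (K * T) := by
          have hK0 : (0 : ℝ) ≤ K := Nat.cast_nonneg K
          have h1' : (2:ℝ) * δ ^ 2 ≤ 2 * (K * T) := by nlinarith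
          have h2'' : (K:ℝ) * δ ^ 2 ≤ K * (K * T) := by nlinarith
          linarith
      _ = (K + 1) ^ 2 * T := by ring
  calc Real.sqrt (∑ a, (max (p a - ν) πmin - max (q a - ν') πmin) ^ 2)
      ≤ Real.sqrt ((K + 1) ^ 2 * T) := Real.sqrt_le_sqrt hsum
    _ = (K + 1) * Real.sqrt T := by
        rw [Real.sqrt_mul (sq_nonneg _), Real.sqrt_sq (by positivity)]
end
end
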